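/- With S1000(N) = (3^N - 1)/2, S909 and S727 defined by the coupled recurrences S909(N+1) = S727(N) + 2*S1000(N) + 1 (N ≥ 1, S909(1)=1) and S727(N+1) = S909(N) + 2*S909(N-1) + 2*S1000(N-1) + 3 (N ≥ 2, S727(1)=1, S727(2)=4), define S636 by S636(1)=1, S636(2)=4, and S636(N+1) = S636(N) + 2*S909(N-1) + 2*S1000(N-1) + 3 for N ≥ 2. Then S636(N)/S1000(N) tends to 7/11 as N → ∞. -/

import Mathlib

open Filter

theorem duration_limit_636 (S1000 S909 S727 S636 : ℕ → ℕ)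
    (h1000 : ∀ N, S1000 N = (3 ^ N - 1) / 2)
    (h909_1 : S909 1 = 1) (h727_1 : S727 1 = 1) (h727_2 : S727 2 = 4)
    (h636_1 : S636 1 = 1) (h636_2 : S636 2 = 4)
    (h909 : ∀ N ≥ 1, S909 (N + 1) = S727 N + 2 * S1000 N + 1)
    (h727 : ∀ N ≥ 2, S727 (N + 1) = S909 N + 2 * S909 (N - 1) + 2 * S1000 (N - 1) + 3)
    (h636 : ∀ N ≥ 2, S636 (N + 1) = S636 N + 2 * S909 (N - 1) + 2 * S1000 (N - 1) + 3) :
    Tendsto (fun N => (S636 N : ℝ) / (S1000 N : ℝ)) atTop (nhds (7 / 11)) := by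
  -- 2 * S1000 N = 3^N - 1 exactly
  have hodd : ∀ M : ℕ, ∃ k, (3:ℕ)^M = 2*k+1 := by
    intro M
    refine ⟨3^M / 2, ?_⟩
    have h := Nat.pow_mod 3 M 2
    simp at h
    omega
  have h2 : ∀ M, 2 * S1000 M = 3^M - 1 := by
    intro M
    obtain ⟨k, hk⟩ := hodd M
    rw [h1000, hk]
    omega
  -- numerical values
  have hv1 : S1000 1 = 1 := by have := h2 1; omega
  have hv2 : S1000 2 = 4 := by have := h2 2; omega
  have e909_2 : S909 2 = 4 := by
    have := h909 1 (by norm_num); rw [this, h727_1, hv1]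
  have e909_3 : S909 3 = 13 := by
    have := h909 2 (by norm_num); rw [this, h727_2, hv2]
  -- recurrence for S909
  have rec909 : ∀ N : ℕ, S909 (N+4) = S909 (N+2) + 2 * S909 (N+1) + 3^(N+1) + 3^(N+3) + 2 := by
    intro N
    have ha := h909 (N+3) (by omega)
    have hb := h727 (N+2) (by omega)
    simp only [show N+2-1 = N+1 from rfl, show N+3+1 = N+4 from rfl,
      show N+2+1 = N+3 from rfl] at ha hb
    have hx := h2 (N+1)
    have hy := h2 (N+3)
    have h31 : (1:ℕ) ≤ 3^(N+1) := Nat.one_le_pow _ _ (by norm_num)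
    have h33 : (1:ℕ) ≤ 3^(N+3) := Nat.one_le_pow _ _ (by norm_num)
    omega
  -- recurrence for S636
  have rec636 : ∀ N : ℕ, S636 (N+3) = S636 (N+2) + 2 * S909 (N+1) + 3^(N+1) + 2 := by
    intro N
    have ha := h636 (N+2) (by omega)
    simp only [show N+2-1 = N+1 from rfl, show N+2+1 = N+3 from rfl] at ha
    have hx := h2 (N+1)
    have h31 : (1:ℕ) ≤ 3^(N+1) := Nat.one_le_pow _ _ (by norm_num)
    omega
  -- key estimate for S909
  set A : ℕ → Prop := fun N => 10 * 3^N ≤ 22 * S909 N + 22 ∧ 22 * S909 N + 22 ≤ 10 * 3^N + 7 * 2^N with hA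
  have key909 : ∀ k : ℕ, A (k+1) ∧ A (k+2) ∧ A (k+3) := by
    intro k
    induction k with
    | zero =>
      simp only [hA]
      norm_num [h909_1, e909_2, e909_3]
    | succ n ih =>
      obtain ⟨h1, h2', h3⟩ := ih
      refine ⟨h2', h3, ?_⟩
      have hr := rec909 n
      simp only [hA] at h1 h2' ⊢
      obtain ⟨l1, u1⟩ := h1
      obtain ⟨l2, u2⟩ := h2'
      have e1 : (3:ℕ)^(n+1) = 3 * 3^n := by ring
      have e2 : (3:ℕ)^(n+2) = 9 * 3^n := by ring
      have e3 : (3:ℕ)^(n+3) = 27 * 3^n := by ring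
      have e4 : (3:ℕ)^(n+4) = 81 * 3^n := by ring
      have f1 : (2:ℕ)^(n+1) = 2 * 2^n := by ring
      have f2 : (2:ℕ)^(n+2) = 4 * 2^n := by ring
      have f4 : (2:ℕ)^(n+4) = 16 * 2^n := by ring
      rw [hr]
      constructor
      · linarith [l1, l2, e1, e2, e3, e4]
      · linarith [u1, u2, e1, e2, e3, e4, f1, f2, f4]
  -- key estimate for S636
  have key636 : ∀ k : ℕ, 7 * 3^(k+2) ≤ 22 * S636 (k+2) ∧
      22 * S636 (k+2) ≤ 7 * 3^(k+2) + 11 * 2^(k+2) := by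
    intro k
    induction k with
    | zero => rw [h636_2]; norm_num
    | succ n ih =>
      obtain ⟨l, u⟩ := ih
      have hr := rec636 n
      obtain ⟨h1, -, -⟩ := key909 n
      simp only [hA] at h1
      obtain ⟨l9, u9⟩ := h1
      have e1 : (3:ℕ)^(n+1) = 3 * 3^n := by ring
      have e2 : (3:ℕ)^(n+2) = 9 * 3^n := by ring
      have e3 : (3:ℕ)^(n+3) = 27 * 3^n := by ring
      have f1 : (2:ℕ)^(n+1) = 2 * 2^n := by ring
      have f2 : (2:ℕ)^(n+2) = 4 * 2^n := by ring
      have f3 : (2:ℕ)^(n+3) = 8 * 2^n := by ring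
      rw [hr]
      constructor
      · linarith [l, l9, e1, e2, e3]
      · linarith [u, u9, e1, e2, e3, f1, f2, f3]
  -- real-valued estimates
  have hS1000R : ∀ N, (S1000 N : ℝ) = ((3:ℝ)^N - 1) / 2 := by
    intro N
    obtain ⟨k, hk⟩ := hodd N
    have hs : S1000 N = k := by rw [h1000, hk]; omega
    rw [hs]
    have hk' : (3:ℝ)^N = 2*k+1 := by exact_mod_cast congrArg (Nat.cast : ℕ → ℝ) hk
    rw [hk']; ring
  -- u N = 22 * S636 N / 3^N → 7
  have hu : Tendsto (fun N => (22 * (S636 N : ℝ)) / 3^N) atTop (nhds 7) := by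
    have hup : Tendsto (fun N : ℕ => 7 + 11 * ((2:ℝ)/3)^N) atTop (nhds 7) := by
      have h0 : Tendsto (fun N : ℕ => ((2:ℝ)/3)^N) atTop (nhds 0) :=
        tendsto_pow_atTop_nhds_zero_of_lt_one (by norm_num) (by norm_num)
      have := h0.const_mul (11:ℝ)
      simpa using (tendsto_const_nhds (x := (7:ℝ))).add this
    refine tendsto_of_tendsto_of_tendsto_of_le_of_le' tendsto_const_nhds hup ?_ ?_
    · filter_upwards [eventually_ge_atTop 2] with N hN
      obtain ⟨k, rfl⟩ : ∃ k, N = k + 2 := ⟨N - 2, by omega⟩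
      have hkey := (key636 k).1
      have h3 : (0:ℝ) < 3^(k+2) := by positivity
      rw [le_div_iff₀ h3]
      have : (7:ℝ) * 3^(k+2) ≤ 22 * (S636 (k+2) : ℝ) := by exact_mod_cast hkey
      linarith
    · filter_upwards [eventually_ge_atTop 2] with N hN
      obtain ⟨k, rfl⟩ : ∃ k, N = k + 2 := ⟨N - 2, by omega⟩
      have hkey := (key636 k).2
      have h3 : (0:ℝ) < 3^(k+2) := by positivity
      rw [div_le_iff₀ h3]
      have hc : 22 * (S636 (k+2) : ℝ) ≤ 7 * 3^(k+2) + 11 * 2^(k+2) := by exact_mod_cast hkey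
      have he : ((2:ℝ)/3)^(k+2) * 3^(k+2) = 2^(k+2) := by
        rw [div_pow]; field_simp
      nlinarith [hc, he]
  -- v N = 22 * S1000 N / 3^N → 11
  have hv : Tendsto (fun N => (22 * (S1000 N : ℝ)) / 3^N) atTop (nhds 11) := by
    have heq : ∀ N : ℕ, (22 * (S1000 N : ℝ)) / 3^N = 11 - 11 * ((1:ℝ)/3)^N := by
      intro N
      rw [hS1000R]
      have h3 : (3:ℝ)^N ≠ 0 := by positivity
      field_simp
      rw [one_div_pow]; field_simp; ring
    have hlim : Tendsto (fun N : ℕ => 11 - 11 * ((1:ℝ)/3)^N) atTop (nhds 11) := by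
      have h0 : Tendsto (fun N : ℕ => ((1:ℝ)/3)^N) atTop (nhds 0) :=
        tendsto_pow_atTop_nhds_zero_of_lt_one (by norm_num) (by norm_num)
      have := h0.const_mul (11:ℝ)
      simpa using (tendsto_const_nhds (x := (11:ℝ))).sub this
    exact hlim.congr (fun N => (heq N).symm)
  have hdiv := hu.div hv (by norm_num)
  refine hdiv.congr' ?_
  filter_upwards [eventually_ge_atTop 1] with N hN
  show (22 * (S636 N : ℝ)) / 3^N / ((22 * (S1000 N : ℝ)) / 3^N) = (S636 N : ℝ) / (S1000 N : ℝ)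
  have h3 : (3:ℝ)^N ≠ 0 := by positivity
  have hpos : 0 < S1000 N := by
    have hh := h2 N
    have : (3:ℕ) ≤ 3^N := by
      calc (3:ℕ) = 3^1 := rfl
      _ ≤ 3^N := Nat.pow_le_pow_right (by norm_num) hN
    omega
  have hne : (S1000 N : ℝ) ≠ 0 := by positivity
  field_simp
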